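/- Let L ≥ 2 be a natural number, b > 0 real, ρ : Fin L → ℝ strictly increasing with ρ_0 = 0 and ρ_{L-1} = 1, and c : Fin L → ℝ. The functions P̃_y(z) = exp(c_y + ρ_y·b·z)/(1+e^z)^b sum to 1 over y for all real z if and only if b = L-1, ρ_y = y/(L-1), and c_y = log(binomial(L-1, y)). -/

import Mathlib

open Filter Finset Real Topology Set

noncomputable def rchoose (b : ℝ) (k : ℕ) : ℝ :=
  (∏ j ∈ Finset.range k, (b - j)) / (Nat.factorial k)

lemma rchoose_zero (b : ℝ) : rchoose b 0 = 1 := by simp [rchoose]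

lemma rchoose_succ (b : ℝ) (k : ℕ) :
    rchoose b (k + 1) = b / (k + 1) * rchoose (b - 1) k := by
  unfold rchoose
  rw [Finset.prod_range_succ']
  have h1 : (∏ j ∈ Finset.range k, (b - ↑(j + 1))) = ∏ j ∈ Finset.range k, ((b - 1) - (j:ℝ)) :=
    Finset.prod_congr rfl fun j _ => by push_cast; ring
  rw [h1]
  simp only [Nat.cast_zero, sub_zero, Nat.factorial_succ]
  push_cast
  field_simp

lemma rchoose_nat (n k : ℕ) (h : k ≤ n) : rchoose (n : ℝ) k = (n.choose k : ℝ) := by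
  unfold rchoose
  have hp : (∏ j ∈ Finset.range k, ((n : ℝ) - j)) = (n.descFactorial k : ℝ) := by
    rw [Nat.descFactorial_eq_prod_range, Nat.cast_prod]
    refine Finset.prod_congr rfl fun i hi => ?_
    rw [Finset.mem_range] at hi
    rw [Nat.cast_sub (by omega)]
  rw [hp, Nat.descFactorial_eq_factorial_mul_choose]
  push_cast
  rw [mul_comm, mul_div_assoc, div_self (by positivity), mul_one]

lemma taylor_limit : ∀ (k : ℕ) (b : ℝ),
    Tendsto (fun t : ℝ => ((1+t)^b - ∑ j ∈ range k, rchoose b j * t^j) / t^k)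
      (𝓝[>] (0:ℝ)) (𝓝 (rchoose b k)) := by
  intro k
  induction k with
  | zero =>
    intro b
    simp only [range_zero, sum_empty, sub_zero, pow_zero, div_one, rchoose_zero]
    have hc : ContinuousAt (fun t : ℝ => (1+t)^b) 0 :=
      (continuousAt_const.add continuousAt_id).rpow_const (Or.inl (by norm_num))
    have h := tendsto_nhdsWithin_of_tendsto_nhds (s := Set.Ioi 0) hc.tendsto
    simp only [add_zero, Real.one_rpow] at h
    exact h
  | succ k ih =>
    intro b
    have key : ∀ x ∈ Ioo (0:ℝ) 1,
        HasDerivAt (fun t : ℝ => (1+t)^b - ∑ j ∈ range (k+1), rchoose b j * t^j)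
          (b*(1+x)^(b-1) - ∑ j ∈ range k, (b * rchoose (b-1) j) * x^j) x := by
      intro x hx
      have h1 : HasDerivAt (fun t : ℝ => (1+t)^b) (b*(1+x)^(b-1)) x := by
        have hne : (fun t : ℝ => 1 + id t) x ≠ 0 :=
          ne_of_gt (by simp only [id_eq]; linarith [hx.1])
        have := (HasDerivAt.const_add 1 (hasDerivAt_id x)).rpow_const (p := b) (Or.inl hne)
        simpa [mul_comm] using this
      have h2 : HasDerivAt (fun t : ℝ => ∑ j ∈ range (k+1), rchoose b j * t^j)
          (∑ j ∈ range (k+1), rchoose b j * (j * x^(j-1))) x :=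
        HasDerivAt.fun_sum fun j _ => (hasDerivAt_pow j x).const_mul (rchoose b j)
      have h3 : (∑ j ∈ range (k+1), rchoose b j * (j * x^(j-1)))
          = ∑ j ∈ range k, (b * rchoose (b-1) j) * x^j := by
        rw [Finset.sum_range_succ']
        simp only [Nat.cast_zero, zero_mul, mul_zero, add_zero]
        refine Finset.sum_congr rfl fun j _ => ?_
        rw [rchoose_succ]
        push_cast
        have hj : (j:ℝ) + 1 ≠ 0 := by positivity
        field_simp
      rw [← h3]
      exact h1.sub h2
    have hg : ∀ x ∈ Ioo (0:ℝ) 1, HasDerivAt (fun t : ℝ => t^(k+1)) ((↑(k+1):ℝ) * x^k) x := by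
      intro x _; simpa using hasDerivAt_pow (k+1) x
    refine HasDerivAt.lhopital_zero_right_on_Ioo zero_lt_one key hg ?_ ?_ ?_ ?_
    · intro x hx
      have h0x : (0:ℝ) < x := hx.1
      positivity
    · have hc : ContinuousAt (fun t : ℝ => (1+t)^b - ∑ j ∈ range (k+1), rchoose b j * t^j) 0 := by
        apply ContinuousAt.sub
        · exact (continuousAt_const.add continuousAt_id).rpow_const (Or.inl (by norm_num))
        · fun_prop
      have h := tendsto_nhdsWithin_of_tendsto_nhds (s := Set.Ioi 0) hc.tendsto
      have h0 : ((1:ℝ)+0)^b - ∑ j ∈ range (k+1), rchoose b j * (0:ℝ)^j = 0 := by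
        simp only [add_zero, Real.one_rpow]
        rw [Finset.sum_range_succ']
        simp [rchoose_zero]
      rw [h0] at h
      exact h
    · have hc : ContinuousAt (fun t : ℝ => t^(k+1)) 0 := by fun_prop
      have h := tendsto_nhdsWithin_of_tendsto_nhds (s := Set.Ioi 0) hc.tendsto
      simp only [zero_pow, Nat.succ_ne_zero, ne_eq, not_false_eq_true] at h
      exact h
    · have hT := (ih (b-1)).const_mul (b / (↑k+1))
      rw [show (b / (↑k+1)) * rchoose (b-1) k = rchoose b (k+1) from (rchoose_succ b k).symm] at hT
      refine Tendsto.congr' ?_ hT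
      filter_upwards [self_mem_nhdsWithin] with x hx
      have hx0 : x ≠ 0 := ne_of_gt hx
      have hk1 : ((k:ℝ)+1) ≠ 0 := by positivity
      rw [show ∑ j ∈ range k, b * rchoose (b-1) j * x^j
            = b * ∑ j ∈ range k, rchoose (b-1) j * x^j by
          rw [Finset.mul_sum]; exact Finset.sum_congr rfl fun j _ => by ring]
      have hxk : x ^ k ≠ 0 := pow_ne_zero _ hx0
      push_cast
      field_simp

theorem elo_model_characterization (L : ℕ) (hL : 2 ≤ L) (b : ℝ) (hb : 0 < b)
    (ρ : Fin L → ℝ) (hρ : StrictMono ρ)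
    (hρ0 : ρ ⟨0, by omega⟩ = 0) (hρlast : ρ ⟨L - 1, by omega⟩ = 1)
    (c : Fin L → ℝ) :
    (∀ z : ℝ, ∑ y : Fin L,
        Real.exp (c y + ρ y * b * z) / (1 + Real.exp z) ^ b = 1)
      ↔ (b = L - 1 ∧ (∀ y : Fin L, ρ y = (y : ℝ) / (L - 1))
          ∧ (∀ y : Fin L, c y = Real.log (Nat.choose (L - 1) y))) := by
  have hL1 : ((L:ℝ) - 1) = ((L - 1 : ℕ):ℝ) := by
    rw [Nat.cast_sub (by omega)]; norm_num
  have hL1pos : (0:ℝ) < (L:ℝ) - 1 := by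
    have : (2:ℝ) ≤ (L:ℝ) := by exact_mod_cast hL
    linarith
  constructor
  · intro hsum
    set A : ℕ → ℝ := fun n => if h : n < L then Real.exp (c ⟨n, h⟩) else 0 with hA
    set β : ℕ → ℝ := fun n => if h : n < L then ρ ⟨n, h⟩ * b else 0 with hβ
    have hApos : ∀ n (h : n < L), 0 < A n := by
      intro n h; simp only [hA, dif_pos h]; exact Real.exp_pos _
    have hβval : ∀ n (h : n < L), β n = ρ ⟨n, h⟩ * b := by
      intro n h; simp only [hβ, dif_pos h]
    have hβmono : ∀ m n, m < n → n < L → β m < β n := by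
      intro m n hmn hnL
      rw [hβval m (by omega), hβval n hnL]
      exact mul_lt_mul_of_pos_right (hρ (by exact hmn)) hb
    have hβle : ∀ n, n < L → β n ≤ b := by
      intro n hnL
      rw [hβval n hnL]
      have : ρ ⟨n, hnL⟩ ≤ ρ ⟨L-1, by omega⟩ := hρ.monotone (by simp [Fin.le_def]; omega)
      rw [hρlast] at this
      nlinarith
    -- the master identity
    have H : ∀ t : ℝ, 0 < t → ∑ n ∈ range L, A n * t ^ (β n) = (1+t)^b := by
      intro t ht
      have h := hsum (Real.log t)
      rw [Real.exp_log ht, ← Finset.sum_div,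
        div_eq_one_iff_eq (ne_of_gt (Real.rpow_pos_of_pos (by linarith) b))] at h
      rw [← h, ← Fin.sum_univ_eq_sum_range (fun n => A n * t ^ β n) L]
      refine Finset.sum_congr rfl fun y _ => ?_
      rw [hβval y y.isLt, Fin.eta]
      simp only [hA, dif_pos y.isLt, Fin.eta]
      rw [Real.rpow_def_of_pos ht, ← Real.exp_add]
      ring_nf
    -- auxiliary: algebraic identity for exponent shifting
    have alg : ∀ (R t : ℝ), 0 < t → ∀ (γ : ℝ) (k : ℕ),
        R / t ^ γ = (R / t^k) * t^((k:ℝ) - γ) := by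
      intro R t ht γ k
      have h1 : t ^ γ ≠ 0 := (Real.rpow_pos_of_pos ht γ).ne'
      have h2 : (t:ℝ) ^ k ≠ 0 := pow_ne_zero _ ht.ne'
      rw [Real.rpow_sub ht, Real.rpow_natCast]
      field_simp
    have rpow0 : ∀ γ : ℝ, 0 < γ → Tendsto (fun t : ℝ => t ^ γ) (𝓝[>] (0:ℝ)) (𝓝 0) := by
      intro γ hγ
      have hc := (Real.continuousAt_rpow_const 0 γ (Or.inr hγ.le)).tendsto
      rw [Real.zero_rpow hγ.ne'] at hc
      exact tendsto_nhdsWithin_of_tendsto_nhds (s := Set.Ioi 0) hc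
    -- the key induction
    have key : ∀ k, k < L → β k = k ∧ A k = rchoose b k := by
      intro k
      induction k using Nat.strong_induction_on with
      | _ k ih =>
      intro hkL
      have hRrem : ∀ t : ℝ, 0 < t →
          (1+t)^b - ∑ j ∈ range k, rchoose b j * t^j
            = ∑ n ∈ Finset.Ico k L, A n * t ^ β n := by
        intro t ht
        have hsplit := Finset.sum_range_add_sum_Ico (fun n => A n * t ^ β n)
          (le_of_lt hkL)
        have hlow : ∑ n ∈ range k, A n * t ^ β n
            = ∑ j ∈ range k, rchoose b j * t^j := by
          refine Finset.sum_congr rfl fun j hj => ?_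
          obtain ⟨hβj, hAj⟩ := ih j (Finset.mem_range.mp hj)
            (lt_trans (Finset.mem_range.mp hj) hkL)
          rw [hβj, hAj, Real.rpow_natCast]
        rw [← H t ht, ← hsplit, hlow]
        ring
      -- limit 1 : remainder / t^(β k) → A k
      have hlim1 : Tendsto (fun t : ℝ =>
          ((1+t)^b - ∑ j ∈ range k, rchoose b j * t^j) / t ^ (β k))
          (𝓝[>] (0:ℝ)) (𝓝 (A k)) := by
        have hcongr : ∀ᶠ t in 𝓝[>] (0:ℝ),
            (∑ n ∈ Finset.Ico k L, A n * t ^ (β n - β k))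
              = ((1+t)^b - ∑ j ∈ range k, rchoose b j * t^j) / t ^ (β k) := by
          filter_upwards [self_mem_nhdsWithin] with t ht
          rw [hRrem t ht, Finset.sum_div]
          refine Finset.sum_congr rfl fun n hn => ?_
          rw [Real.rpow_sub ht, mul_div_assoc]
        refine Tendsto.congr' hcongr ?_
        have hval : (∑ n ∈ Finset.Ico k L, if n = k then A k else 0) = A k := by
          rw [Finset.sum_ite_eq' (Finset.Ico k L) k (fun _ => A k)]
          rw [if_pos (Finset.mem_Ico.mpr ⟨le_refl k, hkL⟩)]
        rw [← hval]
        refine tendsto_finset_sum _ fun n hn => ?_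
        rcases eq_or_ne n k with rfl | hne
        · simp only [if_pos rfl, sub_self, Real.rpow_zero, mul_one]
          exact tendsto_const_nhds
        · simp only [if_neg hne]
          have hkn : k < n := lt_of_le_of_ne (Finset.mem_Ico.mp hn).1 (Ne.symm hne)
          have hpos : 0 < β n - β k :=
            sub_pos.mpr (hβmono k n hkn (Finset.mem_Ico.mp hn).2)
          have := (rpow0 _ hpos).const_mul (A n)
          simpa using this
      have hlim2 := taylor_limit k b
      rcases lt_trichotomy (β k) (k:ℝ) with hlt | heqk | hgt
      · exfalso
        have h0 : Tendsto (fun t : ℝ =>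
            ((1+t)^b - ∑ j ∈ range k, rchoose b j * t^j) / t ^ (β k))
            (𝓝[>] (0:ℝ)) (𝓝 0) := by
          have hmul := hlim2.mul (rpow0 ((k:ℝ) - β k) (by linarith))
          rw [mul_zero] at hmul
          refine Tendsto.congr' ?_ hmul
          filter_upwards [self_mem_nhdsWithin] with t ht
          exact (alg _ t ht (β k) k).symm
        have := tendsto_nhds_unique hlim1 h0
        exact (hApos k hkL).ne' (by linarith [this])
      · refine ⟨heqk, ?_⟩
        rw [heqk] at hlim1
        simp only [Real.rpow_natCast] at hlim1
        exact tendsto_nhds_unique hlim1 hlim2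
      · exfalso
        have hbk : β k ≤ b := hβle k hkL
        by_cases hch : rchoose b k = 0
        · -- b is a natural number j < k, contradiction with k < β k ≤ b
          have hprod : (∏ j ∈ Finset.range k, (b - (j:ℝ))) = 0 := by
            unfold rchoose at hch
            rcases div_eq_zero_iff.mp hch with h | h
            · exact h
            · exact absurd h (by exact_mod_cast Nat.factorial_ne_zero k)
          obtain ⟨j, hj, hbj⟩ := Finset.prod_eq_zero_iff.mp hprod
          have hbj' : b = (j:ℝ) := by linarith [sub_eq_zero.mp hbj]
          have : (j:ℝ) < (k:ℝ) := by exact_mod_cast Finset.mem_range.mp hj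
          linarith
        · -- |remainder / t^(β k)| → ∞ but also → |A k|
          have habs : Tendsto (fun t : ℝ =>
              |((1+t)^b - ∑ j ∈ range k, rchoose b j * t^j) / t ^ (β k)|)
              (𝓝[>] (0:ℝ)) (𝓝 |A k|) := hlim1.abs
          have hatTop : Tendsto (fun t : ℝ =>
              |((1+t)^b - ∑ j ∈ range k, rchoose b j * t^j) / t ^ (β k)|)
              (𝓝[>] (0:ℝ)) atTop := by
            have hg : Tendsto (fun t : ℝ => t ^ ((k:ℝ) - β k)) (𝓝[>] (0:ℝ)) atTop := by
              have hinner : Tendsto (fun t : ℝ => t ^ (β k - (k:ℝ))) (𝓝[>] (0:ℝ))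
                  (𝓝[>] (0:ℝ)) := by
                rw [tendsto_nhdsWithin_iff]
                refine ⟨rpow0 _ (by linarith), ?_⟩
                filter_upwards [self_mem_nhdsWithin] with t ht
                exact Real.rpow_pos_of_pos ht _
              have := hinner.inv_tendsto_nhdsGT_zero
              refine Tendsto.congr' ?_ this
              filter_upwards [self_mem_nhdsWithin] with t ht
              simp only [Pi.inv_apply]
              rw [← Real.rpow_neg (le_of_lt ht), neg_sub]
            have := Filter.Tendsto.pos_mul_atTop (abs_pos.mpr hch) hlim2.abs hg
            refine Tendsto.congr' ?_ this
            filter_upwards [self_mem_nhdsWithin] with t ht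
            rw [alg _ t ht (β k) k, abs_mul,
              abs_of_pos (Real.rpow_pos_of_pos ht _)]
          exact not_tendsto_atTop_of_tendsto_nhds habs hatTop
    -- extract conclusions
    have hblast : b = (L:ℝ) - 1 := by
      have h1 := (key (L-1) (by omega)).1
      rw [hβval (L-1) (by omega), hρlast, one_mul] at h1
      rw [h1, hL1]
    refine ⟨hblast, ?_, ?_⟩
    · intro y
      have h1 := (key y y.isLt).1
      rw [hβval y y.isLt, Fin.eta] at h1
      rw [← hblast]
      field_simp [hb.ne'] at h1 ⊢
      linarith [h1]
    · intro y
      have h2 := (key y y.isLt).2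
      have hyle : (y:ℕ) ≤ L - 1 := by omega
      simp only [hA, dif_pos y.isLt, Fin.eta] at h2
      rw [hblast, hL1, rchoose_nat _ _ hyle] at h2
      rw [← h2, Real.log_exp]
  · rintro ⟨hbeq, hρeq, hceq⟩ z
    have hez : (0:ℝ) < 1 + Real.exp z := by positivity
    have hden : (1 + Real.exp z) ^ b = (1 + Real.exp z) ^ (L - 1 : ℕ) := by
      rw [hbeq, hL1, Real.rpow_natCast]
    have hterm : ∀ y : Fin L, Real.exp (c y + ρ y * b * z)
        = (Nat.choose (L-1) y : ℝ) * Real.exp z ^ (y : ℕ) := by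
      intro y
      have hyle : (y : ℕ) ≤ L - 1 := by omega
      have hcpos : (0:ℝ) < (Nat.choose (L-1) y : ℝ) := by
        exact_mod_cast Nat.choose_pos hyle
      have hρy : ρ y * b = (y : ℝ) := by
        rw [hρeq y, hbeq, div_mul_cancel₀ _ (ne_of_gt hL1pos)]
      rw [hceq y, hρy, Real.exp_add, Real.exp_log hcpos, Real.exp_nat_mul z y]
    calc ∑ y : Fin L, Real.exp (c y + ρ y * b * z) / (1 + Real.exp z) ^ b
        = (∑ y : Fin L, (Nat.choose (L-1) y : ℝ) * Real.exp z ^ (y:ℕ))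
            / (1 + Real.exp z) ^ (L-1:ℕ) := by
          rw [Finset.sum_div]
          exact Finset.sum_congr rfl fun y _ => by rw [hterm y, hden]
      _ = 1 := by
          rw [show (∑ y : Fin L, (Nat.choose (L-1) y : ℝ) * Real.exp z ^ (y:ℕ))
              = ∑ n ∈ range L, (Nat.choose (L-1) n : ℝ) * Real.exp z ^ n from
            Fin.sum_univ_eq_sum_range (fun n => (Nat.choose (L-1) n : ℝ) * Real.exp z ^ n) L]
          have hbinom : (1 + Real.exp z)^(L-1)
              = ∑ n ∈ range L, (Nat.choose (L-1) n : ℝ) * Real.exp z ^ n := by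
            rw [add_comm, add_pow, show (L-1)+1 = L by omega]
            exact Finset.sum_congr rfl fun m hm => by rw [one_pow]; ring
          rw [div_eq_one_iff_eq (by positivity : ((1 + Real.exp z)^(L-1):ℝ) ≠ 0)]
          exact hbinom.symm
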